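/- Let (X, A, m) be a probability space, H a measurable space, ξ : X → H measurable. Let (K, d) be a compact metric space with a finite Borel measure μ_K, T > 0, t ∈ (0, T], 0 < λ₋ ≤ λ₊. Let Λ : X × [0, T] × K → ℝ be measurable with λ₋ ≤ Λ ≤ λ₊ everywhere, and suppose that for every ω ∈ X the map (s, x) ↦ Λ(ω, s, x) is continuous on [0, T] × K. Fix observation points (s_1, y_1), …, (s_N, y_N) ∈ (0, t] × K. For each M ∈ ℕ, let K = K^M_1 ⊎ … ⊎ K^M_{n_M} be a partition into measurable sets with μ_K(K^M_i) > 0 and max_i diam(K^M_i) ≤ D_M, where D_M → 0; let θ_M(ω, s, y) be the average of Λ(ω, s, ·) over the cell K^M{y} containing y. Define z(ω) := exp( Σ_j log Λ(ω, s_j, y_j) − I(ω) ), z^M(ω) := exp( Σ_j log θ_M(ω, s_j, y_j) − I(ω) ) with I(ω) := ∫_0^t ∫_K (Λ(ω, s, x) − 1) dμ_K(x) ds, and the measures on H: ρ(A) := ∫_X 1_A(ξ(ω)) z(ω) dm(ω), ρ^M(A) := ∫_X 1_A(ξ(ω)) z^M(ω) dm(ω). Then sup over measurable A ⊆ H of |ρ^M(A)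 − ρ(A)| tends to 0 as M → ∞. -/

import Mathlib

open MeasureTheory Filter
open scoped BigOperators

/-- Consistency of the unnormalized (Zakai) posterior: as the mesh of the spatial
partitions tends to zero, the discretized posteriors converge to the exact
posterior in total variation (uniformly over measurable sets). -/
theorem zakai_discretization_convergence
    {X : Type*} [MeasurableSpace X] (m : Measure X) [IsProbabilityMeasure m]
    {H : Type*} [MeasurableSpace H] (ξ : X → H) (hξ : Measurable ξ)
    {K : Type*} [MetricSpace K] [CompactSpace K]
    [MeasurableSpace K] [OpensMeasurableSpace K]
    (μK : Measure K) [IsFiniteMeasure μK]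
    (T t : ℝ) (hT : 0 < T) (ht : 0 < t) (htT : t ≤ T)
    (lm lp : ℝ) (hlm : 0 < lm) (hlmp : lm ≤ lp)
    (Λ : X → ℝ → K → ℝ)
    (hmeas : Measurable (fun p : X × ℝ × K => Λ p.1 p.2.1 p.2.2))
    (hlow : ∀ ω s x, lm ≤ Λ ω s x) (hhigh : ∀ ω s x, Λ ω s x ≤ lp)
    (hcont : ∀ ω, Continuous (fun p : ℝ × K => Λ ω p.1 p.2))
    (N : ℕ) (s : Fin N → ℝ) (y : Fin N → K)
    (hs : ∀ j, s j ∈ Set.Ioc (0 : ℝ) t)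
    (nM : ℕ → ℕ) (part : (M : ℕ) → Fin (nM M) → Set K)
    (hpmeas : ∀ M i, MeasurableSet (part M i))
    (hdisj : ∀ M, Pairwise (Function.onFun Disjoint (part M)))
    (hcover : ∀ M, (⋃ i, part M i) = Set.univ)
    (hppos : ∀ M i, 0 < μK (part M i))
    (D : ℕ → ℝ) (hD : ∀ M, 0 ≤ D M)
    (hdiam : ∀ M i, Metric.diam (part M i) ≤ D M)
    (hDlim : Tendsto D atTop (nhds 0))
    (cell : (M : ℕ) → K → Fin (nM M)) (hcell : ∀ M x, x ∈ part M (cell M x))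
    (θ : ℕ → X → ℝ → K → ℝ)
    (hθ : ∀ M ω u x, θ M ω u x =
      (μK (part M (cell M x))).toReal⁻¹ * ∫ w in part M (cell M x), Λ ω u w ∂μK)
    (I : X → ℝ)
    (hI : ∀ ω, I ω = ∫ u in (0 : ℝ)..t, ∫ x, (Λ ω u x - 1) ∂μK)
    (z : X → ℝ) (zM : ℕ → X → ℝ)
    (hz : ∀ ω, z ω = Real.exp ((∑ j, Real.log (Λ ω (s j) (y j))) - I ω))
    (hzM : ∀ M ω, zM M ω = Real.exp ((∑ j, Real.log (θ M ω (s j) (y j))) - I ω))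
    (ρ : Set H → ℝ) (ρM : ℕ → Set H → ℝ)
    (hρ : ∀ A : Set H, ρ A = ∫ ω, Set.indicator A (fun _ => (1 : ℝ)) (ξ ω) * z ω ∂m)
    (hρM : ∀ M, ∀ A : Set H,
      ρM M A = ∫ ω, Set.indicator A (fun _ => (1 : ℝ)) (ξ ω) * zM M ω ∂m) :
    ∀ ε > (0 : ℝ), ∃ M₀ : ℕ, ∀ M ≥ M₀, ∀ A : Set H, MeasurableSet A →
      |ρM M A - ρ A| ≤ ε := by
  have hΛpos : ∀ ω u x, 0 < Λ ω u x := fun ω u x => lt_of_lt_of_le hlm (hlow ω u x)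
  have hΛcx : ∀ ω u, Continuous fun x : K => Λ ω u x := fun ω u =>
    (hcont ω).comp (Continuous.prodMk_right u)
  have hintΛ : ∀ ω u, Integrable (fun w => Λ ω u w) μK := by
    intro ω u
    refine Integrable.mono' (integrable_const lp) (hΛcx ω u).aestronglyMeasurable ?_
    exact Eventually.of_forall fun w => by
      rw [Real.norm_eq_abs, abs_of_pos (hΛpos ω u w)]; exact hhigh ω u w
  have hμfin : ∀ M i, μK (part M i) < ⊤ := fun M i => measure_lt_top μK _
  have hcpos : ∀ M i, 0 < (μK (part M i)).toReal := fun M i =>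
    ENNReal.toReal_pos (hppos M i).ne' (hμfin M i).ne
  -- bounds on θ
  have hθlb : ∀ M ω u x, lm ≤ θ M ω u x := by
    intro M ω u x
    rw [hθ]
    set S := part M (cell M x)
    set c := (μK S).toReal with hc
    have hcp : 0 < c := hcpos M _
    have h1 : lm * c ≤ ∫ w in S, Λ ω u w ∂μK := by
      have := setIntegral_mono_on (s := S) (integrableOn_const (hμfin M _).ne)
        ((hintΛ ω u).integrableOn) (hpmeas M _) (fun w _ => hlow ω u w)
      simpa [setIntegral_const, smul_eq_mul, mul_comm, measureReal_def] using this
    calc lm = c⁻¹ * (lm * c) := by field_simp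
    _ ≤ c⁻¹ * ∫ w in S, Λ ω u w ∂μK :=
        mul_le_mul_of_nonneg_left h1 (inv_nonneg.2 hcp.le)
  have hθub : ∀ M ω u x, θ M ω u x ≤ lp := by
    intro M ω u x
    rw [hθ]
    set S := part M (cell M x)
    set c := (μK S).toReal with hc
    have hcp : 0 < c := hcpos M _
    have h1 : (∫ w in S, Λ ω u w ∂μK) ≤ lp * c := by
      have := setIntegral_mono_on (s := S) ((hintΛ ω u).integrableOn)
        (integrableOn_const (hμfin M _).ne)
        (hpmeas M _) (fun w _ => hhigh ω u w)
      simpa [setIntegral_const, smul_eq_mul, mul_comm, measureReal_def] using this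
    calc (μK S).toReal⁻¹ * ∫ w in S, Λ ω u w ∂μK ≤ c⁻¹ * (lp * c) :=
        mul_le_mul_of_nonneg_left h1 (inv_nonneg.2 hcp.le)
    _ = lp := by field_simp
  have hθpos : ∀ M ω u x, 0 < θ M ω u x := fun M ω u x => hlm.trans_le (hθlb M ω u x)
  -- pointwise convergence of θ at the observation points
  have hθtend : ∀ ω j, Tendsto (fun M => θ M ω (s j) (y j)) atTop
      (nhds (Λ ω (s j) (y j))) := by
    intro ω j
    rw [Metric.tendsto_atTop]
    intro ε hε
    have hUC : UniformContinuous fun x : K => Λ ω (s j) x :=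
      CompactSpace.uniformContinuous_of_continuous (hΛcx ω (s j))
    obtain ⟨δ, hδ, hδ'⟩ := Metric.uniformContinuous_iff.1 hUC (ε / 2) (half_pos hε)
    obtain ⟨M₁, hM₁⟩ := eventually_atTop.1 (hDlim.eventually_lt_const hδ)
    refine ⟨M₁, fun M hM => ?_⟩
    set S := part M (cell M (y j))
    set c := (μK S).toReal with hc
    have hcp : 0 < c := hcpos M _
    have hWδ : ∀ w ∈ S, ‖Λ ω (s j) w - Λ ω (s j) (y j)‖ ≤ ε / 2 := by
      intro w hw
      have hdwy : dist w (y j) < δ :=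
        lt_of_le_of_lt ((Metric.dist_le_diam_of_mem Metric.isBounded_of_compactSpace hw
          (hcell M (y j))).trans (hdiam M _)) (hM₁ M hM)
      exact le_of_lt (by simpa [Real.dist_eq] using hδ' hdwy)
    have hdiff : θ M ω (s j) (y j) - Λ ω (s j) (y j)
        = c⁻¹ * ∫ w in S, (Λ ω (s j) w - Λ ω (s j) (y j)) ∂μK := by
      rw [hθ, integral_sub ((hintΛ ω (s j)).integrableOn)
        (integrableOn_const (hμfin M _).ne),
        setIntegral_const, smul_eq_mul, measureReal_def, ← hc]
      field_simp
    have hnorm : ‖∫ w in S, (Λ ω (s j) w - Λ ω (s j) (y j)) ∂μK‖ ≤ (ε / 2) * c :=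
      norm_setIntegral_le_of_norm_le_const (hμfin M _) hWδ
    rw [Real.dist_eq, hdiff, abs_mul, abs_of_pos (inv_pos.2 hcp)]
    calc c⁻¹ * |∫ w in S, (Λ ω (s j) w - Λ ω (s j) (y j)) ∂μK| ≤ c⁻¹ * ((ε / 2) * c) :=
        mul_le_mul_of_nonneg_left hnorm (inv_nonneg.2 hcp.le)
    _ = ε / 2 := by field_simp
    _ < ε := half_lt_self hε
  -- lower bound on I
  have hμU : (μK Set.univ).toReal = (μK Set.univ).toReal := rfl
  have hglb : ∀ ω u, (lm - 1) * (μK Set.univ).toReal ≤ ∫ x, (Λ ω u x - 1) ∂μK := by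
    intro ω u
    have hint2 : Integrable (fun x => Λ ω u x - 1) μK := (hintΛ ω u).sub (integrable_const 1)
    have := integral_mono (integrable_const (lm - 1)) hint2
      (fun x => by have := hlow ω u x; simp only; linarith)
    simpa [integral_const, smul_eq_mul, mul_comm, measureReal_def] using this
  have hgmeas : ∀ ω, StronglyMeasurable fun u : ℝ => ∫ x, (Λ ω u x - 1) ∂μK := by
    intro ω
    have h1 : StronglyMeasurable fun p : ℝ × K => Λ ω p.1 p.2 - 1 :=
      ((hcont ω).sub continuous_const).stronglyMeasurable
    exact h1.integral_prod_right'
  have hgint : ∀ ω, IntervalIntegrable (fun u => ∫ x, (Λ ω u x - 1) ∂μK) volume 0 t := by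
    intro ω
    rw [intervalIntegrable_iff, Set.uIoc_of_le ht.le]
    refine Integrable.mono' (g := fun _ : ℝ => (lp + 1) * (μK Set.univ).toReal)
      (integrableOn_const measure_Ioc_lt_top.ne)
      (hgmeas ω).aestronglyMeasurable.restrict ?_
    refine Eventually.of_forall fun u => ?_
    calc ‖∫ x, (Λ ω u x - 1) ∂μK‖ ≤ ∫ x, ‖Λ ω u x - 1‖ ∂μK :=
        norm_integral_le_integral_norm _
    _ ≤ ∫ _x, (lp + 1) ∂μK := by
        refine integral_mono (((hintΛ ω u).sub (integrable_const 1)).norm)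
          (integrable_const _) fun x => ?_
        have h1 := hlow ω u x; have h2 := hhigh ω u x
        rw [Real.norm_eq_abs, abs_le]
        constructor <;> simp only <;> nlinarith
    _ = (lp + 1) * (μK Set.univ).toReal := by
        simp [integral_const, smul_eq_mul, mul_comm, measureReal_def]
  have hIlb : ∀ ω, t * ((lm - 1) * (μK Set.univ).toReal) ≤ I ω := by
    intro ω
    rw [hI]
    have h := intervalIntegral.integral_mono_on ht.le (intervalIntegrable_const
      (c := (lm - 1) * (μK Set.univ).toReal)) (hgint ω) (fun u _ => hglb ω u)
    rw [intervalIntegral.integral_const, smul_eq_mul, sub_zero] at h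
    exact h
  -- uniform bound C on z, zM
  set C : ℝ := Real.exp ((N : ℝ) * Real.log lp + t * ((1 - lm) * (μK Set.univ).toReal))
    with hC
  have hCpos : 0 < C := Real.exp_pos _
  have key : ∀ (ω : X) (v : Fin N → ℝ), (∀ j, lm ≤ v j) → (∀ j, v j ≤ lp) →
      Real.exp ((∑ j, Real.log (v j)) - I ω) ≤ C := by
    intro ω v h1 h2
    rw [hC]
    apply Real.exp_le_exp.2
    have hsum : (∑ j, Real.log (v j)) ≤ (N : ℝ) * Real.log lp := by
      calc (∑ j, Real.log (v j)) ≤ ∑ _j : Fin N, Real.log lp :=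
          Finset.sum_le_sum fun j _ =>
            Real.log_le_log (hlm.trans_le (h1 j)) (h2 j)
      _ = (N : ℝ) * Real.log lp := by
          simp [Finset.sum_const, Finset.card_univ, nsmul_eq_mul]
    have hIω := hIlb ω
    have hring : t * ((1 - lm) * (μK Set.univ).toReal)
        = -(t * ((lm - 1) * (μK Set.univ).toReal)) := by ring
    linarith
  have hzpos : ∀ ω, 0 < z ω := fun ω => by rw [hz]; exact Real.exp_pos _
  have hzMpos : ∀ M ω, 0 < zM M ω := fun M ω => by rw [hzM]; exact Real.exp_pos _
  have hzle : ∀ ω, z ω ≤ C := fun ω => by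
    rw [hz]; exact key ω _ (fun j => hlow ω _ _) (fun j => hhigh ω _ _)
  have hzMle : ∀ M ω, zM M ω ≤ C := fun M ω => by
    rw [hzM]; exact key ω _ (fun j => hθlb M ω _ _) (fun j => hθub M ω _ _)
  -- measurability of z and zM
  have hImeas : Measurable I := by
    have h1 : StronglyMeasurable fun q : (X × ℝ) × K => Λ q.1.1 q.1.2 q.2 - 1 := by
      have : Measurable fun q : (X × ℝ) × K => Λ q.1.1 q.1.2 q.2 := by
        exact hmeas.comp ((measurable_fst.comp measurable_fst).prodMk
          ((measurable_snd.comp measurable_fst).prodMk measurable_snd))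
      exact (this.sub measurable_const).stronglyMeasurable
    have h2 : StronglyMeasurable fun p : X × ℝ => ∫ x, (Λ p.1 p.2 x - 1) ∂μK :=
      h1.integral_prod_right'
    have h3 : StronglyMeasurable fun ω : X =>
        ∫ u, (∫ x, (Λ ω u x - 1) ∂μK) ∂(volume.restrict (Set.Ioc (0:ℝ) t)) :=
      h2.integral_prod_right'
    have h4 : I = fun ω : X =>
        ∫ u, (∫ x, (Λ ω u x - 1) ∂μK) ∂(volume.restrict (Set.Ioc (0:ℝ) t)) := by
      funext ω
      rw [hI, intervalIntegral.integral_of_le ht.le]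
    rw [h4]
    exact h3.measurable
  have hθmeas : ∀ M j, Measurable fun ω => θ M ω (s j) (y j) := by
    intro M j
    have h1 : Measurable fun p : X × K => Λ p.1 (s j) p.2 :=
      hmeas.comp (measurable_fst.prodMk (measurable_const.prodMk measurable_snd))
    have h2 : StronglyMeasurable fun ω : X =>
        ∫ w, Λ ω (s j) w ∂(μK.restrict (part M (cell M (y j)))) :=
      h1.stronglyMeasurable.integral_prod_right'
    have h3 : (fun ω => θ M ω (s j) (y j)) = fun ω =>
        (μK (part M (cell M (y j)))).toReal⁻¹ *
          ∫ w, Λ ω (s j) w ∂(μK.restrict (part M (cell M (y j)))) := by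
      funext ω; rw [hθ]
    rw [h3]
    exact (h2.measurable.const_mul _)
  have hzmeas : Measurable z := by
    have h1 : ∀ j : Fin N, Measurable fun ω => Real.log (Λ ω (s j) (y j)) := fun j =>
      Real.measurable_log.comp (hmeas.comp (measurable_id.prodMk
        (measurable_const.prodMk measurable_const)))
    have h2 : Measurable fun ω => (∑ j, Real.log (Λ ω (s j) (y j))) - I ω :=
      (Finset.measurable_sum _ fun j _ => h1 j).sub hImeas
    have h3 : z = fun ω => Real.exp ((∑ j, Real.log (Λ ω (s j) (y j))) - I ω) :=
      funext hz
    rw [h3]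
    exact Real.measurable_exp.comp h2
  have hzMmeas : ∀ M, Measurable (zM M) := by
    intro M
    have h2 : Measurable fun ω => (∑ j, Real.log (θ M ω (s j) (y j))) - I ω :=
      (Finset.measurable_sum _ fun j _ =>
        Real.measurable_log.comp (hθmeas M j)).sub hImeas
    have h3 : zM M = fun ω => Real.exp ((∑ j, Real.log (θ M ω (s j) (y j))) - I ω) :=
      funext (hzM M)
    rw [h3]
    exact Real.measurable_exp.comp h2
  -- pointwise convergence of zM to z
  have hzMtend : ∀ ω, Tendsto (fun M => zM M ω) atTop (nhds (z ω)) := by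
    intro ω
    have h1 : Tendsto (fun M => (∑ j, Real.log (θ M ω (s j) (y j))) - I ω) atTop
        (nhds ((∑ j, Real.log (Λ ω (s j) (y j))) - I ω)) := by
      refine Tendsto.sub ?_ tendsto_const_nhds
      refine tendsto_finset_sum _ fun j _ => ?_
      exact ((Real.continuousAt_log (hΛpos ω (s j) (y j)).ne').tendsto).comp (hθtend ω j)
    have h2 := (Real.continuous_exp.tendsto _).comp h1
    have h3 : (fun M => zM M ω) = fun M =>
        Real.exp ((∑ j, Real.log (θ M ω (s j) (y j))) - I ω) := by
      funext M; rw [hzM]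
    rw [h3, hz]
    exact h2
  have hdiffint : ∀ M, Integrable (fun ω => |zM M ω - z ω|) m := by
    intro M
    refine Integrable.mono' (integrable_const (2 * C))
      (((hzMmeas M).sub hzmeas).abs).aestronglyMeasurable
      (Eventually.of_forall fun ω => ?_)
    rw [Real.norm_eq_abs, abs_abs]
    calc |zM M ω - z ω| ≤ |zM M ω| + |z ω| := abs_sub _ _
    _ ≤ C + C := add_le_add
        (by rw [abs_of_pos (hzMpos M ω)]; exact hzMle M ω)
        (by rw [abs_of_pos (hzpos ω)]; exact hzle ω)
    _ = 2 * C := by ring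
  -- dominated convergence
  have hdct : Tendsto (fun M => ∫ ω, |zM M ω - z ω| ∂m) atTop (nhds 0) := by
    have h0 : (0 : ℝ) = ∫ _ω, (0 : ℝ) ∂m := by simp
    rw [h0]
    refine tendsto_integral_of_dominated_convergence (fun _ => 2 * C)
      (fun M => (((hzMmeas M).sub hzmeas).abs).aestronglyMeasurable)
      (integrable_const _) (fun M => Eventually.of_forall fun ω => ?_)
      (Eventually.of_forall fun ω => ?_)
    · rw [Real.norm_eq_abs, abs_abs]
      calc |zM M ω - z ω| ≤ |zM M ω| + |z ω| := abs_sub _ _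
      _ ≤ C + C := add_le_add
          (by rw [abs_of_pos (hzMpos M ω)]; exact hzMle M ω)
          (by rw [abs_of_pos (hzpos ω)]; exact hzle ω)
      _ = 2 * C := by ring
    · have := ((hzMtend ω).sub (tendsto_const_nhds (x := z ω))).abs
      simpa using this
  -- conclusion
  intro ε hε
  obtain ⟨M₀, hM₀⟩ := eventually_atTop.1 (hdct.eventually_lt_const hε)
  refine ⟨M₀, fun M hM A hA => ?_⟩
  have hindm : Measurable fun ω => Set.indicator A (fun _ => (1 : ℝ)) (ξ ω) :=
    (measurable_const.indicator hA).comp hξ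
  have hind01 : ∀ ω, |Set.indicator A (fun _ => (1 : ℝ)) (ξ ω)| ≤ 1 := by
    intro ω
    by_cases h : ξ ω ∈ A <;> simp [Set.indicator_apply, h]
  have hint1 : Integrable (fun ω => Set.indicator A (fun _ => (1 : ℝ)) (ξ ω) * zM M ω) m := by
    refine Integrable.mono' (integrable_const C)
      ((hindm.mul (hzMmeas M)).aestronglyMeasurable) (Eventually.of_forall fun ω => ?_)
    rw [Real.norm_eq_abs, abs_mul]
    have h1 : |zM M ω| ≤ C := by rw [abs_of_pos (hzMpos M ω)]; exact hzMle M ω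
    have h2 := mul_le_mul (hind01 ω) h1 (abs_nonneg _) zero_le_one
    simpa using h2
  have hint2 : Integrable (fun ω => Set.indicator A (fun _ => (1 : ℝ)) (ξ ω) * z ω) m := by
    refine Integrable.mono' (integrable_const C)
      ((hindm.mul hzmeas).aestronglyMeasurable) (Eventually.of_forall fun ω => ?_)
    rw [Real.norm_eq_abs, abs_mul]
    have h1 : |z ω| ≤ C := by rw [abs_of_pos (hzpos ω)]; exact hzle ω
    have h2 := mul_le_mul (hind01 ω) h1 (abs_nonneg _) zero_le_one
    simpa using h2
  have hsub : ρM M A - ρ A = ∫ ω, (Set.indicator A (fun _ => (1 : ℝ)) (ξ ω) * zM M ω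
      - Set.indicator A (fun _ => (1 : ℝ)) (ξ ω) * z ω) ∂m := by
    rw [hρM, hρ, integral_sub hint1 hint2]
  calc |ρM M A - ρ A| ≤ ∫ ω, |Set.indicator A (fun _ => (1 : ℝ)) (ξ ω) * zM M ω
      - Set.indicator A (fun _ => (1 : ℝ)) (ξ ω) * z ω| ∂m := by
        rw [hsub]
        simpa [Real.norm_eq_abs] using norm_integral_le_integral_norm
          (μ := m) (fun ω => Set.indicator A (fun _ => (1 : ℝ)) (ξ ω) * zM M ω
            - Set.indicator A (fun _ => (1 : ℝ)) (ξ ω) * z ω)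
  _ ≤ ∫ ω, |zM M ω - z ω| ∂m := by
      refine integral_mono ((hint1.sub hint2).abs) (hdiffint M) fun ω => ?_
      rw [← mul_sub, abs_mul]
      calc |Set.indicator A (fun _ => (1 : ℝ)) (ξ ω)| * |zM M ω - z ω|
          ≤ 1 * |zM M ω - z ω| :=
            mul_le_mul_of_nonneg_right (hind01 ω) (abs_nonneg _)
      _ = |zM M ω - z ω| := one_mul _
  _ ≤ ε := le_of_lt (hM₀ M hM)
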